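/- Let X be in M_n with ||X||_infty <= gamma and define tau = sup{k <= n : sum_{i=1}^k E[X_i^2 | F_{i-1}] <= s^2(X)} (with tau = 0 if the set is empty). Then, almost surely, sum_{i=1}^tau E[X_i^2 | F_{i-1}] >= min(s^2(X)*V^2(X), s^2(X) - gamma^2). -/

import Mathlib

open MeasureTheory ProbabilityTheory Real

/-- Lower bound on the running conditional variance at the random time `τ`. -/
theorem running_conditional_variance_at_tau
    {Ω : Type*} {mΩ : MeasurableSpace Ω} (μ : Measure Ω) [IsProbabilityMeasure μ]
    (n : ℕ) (hn : 1 ≤ n) (X : ℕ → Ω → ℝ) (ℱ : ℕ → MeasurableSpace Ω)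
    (hmono : Monotone ℱ) (hle : ∀ i, ℱ i ≤ mΩ)
    (hadapted : ∀ i, 1 ≤ i → i ≤ n → Measurable[ℱ i] (X i))
    (hL2 : ∀ i, 1 ≤ i → i ≤ n → MemLp (X i) 2 μ)
    (hmds : ∀ i, 1 ≤ i → i ≤ n → μ[X i | ℱ (i - 1)] =ᵐ[μ] 0)
    (γ : ℝ) (hγ : 0 < γ) (hbound : ∀ i, 1 ≤ i → i ≤ n → ∀ᵐ ω ∂μ, |X i ω| ≤ γ)
    (s2 : ℝ) (hs2 : s2 = ∑ i ∈ Finset.Icc 1 n, ∫ ω, (X i ω) ^ 2 ∂μ) (hpos : 0 < s2)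
    (τ : Ω → ℕ)
    (hτ : ∀ ω, τ ω = sSup {k : ℕ | k ≤ n ∧
        ∑ i ∈ Finset.Icc 1 k, (μ[fun ω' => (X i ω') ^ 2 | ℱ (i - 1)]) ω ≤ s2}) :
    ∀ᵐ ω ∂μ,
      min (s2 * (s2⁻¹ * ∑ i ∈ Finset.Icc 1 n, (μ[fun ω' => (X i ω') ^ 2 | ℱ (i - 1)]) ω))
          (s2 - γ ^ 2)
        ≤ ∑ i ∈ Finset.Icc 1 (τ ω), (μ[fun ω' => (X i ω') ^ 2 | ℱ (i - 1)]) ω := by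
  have hbd : ∀ i ∈ Finset.Icc 1 n,
      ∀ᵐ ω ∂μ, (μ[fun ω' => (X i ω') ^ 2 | ℱ (i - 1)]) ω ≤ γ ^ 2 := by
    intro i hi
    rw [Finset.mem_Icc] at hi
    have hint : Integrable (fun ω => (X i ω) ^ 2) μ := by
      simpa [sq] using (hL2 i hi.1 hi.2).integrable_sq
    have hle2 : (fun ω => (X i ω) ^ 2) ≤ᵐ[μ] fun _ => γ ^ 2 := by
      filter_upwards [hbound i hi.1 hi.2] with ω hω
      calc (X i ω) ^ 2 = |X i ω| ^ 2 := (sq_abs _).symm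
        _ ≤ γ ^ 2 := pow_le_pow_left₀ (abs_nonneg _) hω 2
    have h1 := condExp_mono (m := ℱ (i - 1)) hint (integrable_const (γ ^ 2)) hle2
    have h2 : μ[(fun _ => γ ^ 2 : Ω → ℝ) | ℱ (i - 1)] = fun _ => γ ^ 2 :=
      condExp_const (hle _) _
    filter_upwards [h1] with ω hω
    simpa [h2] using hω
  have hbd' : ∀ᵐ ω ∂μ, ∀ i ∈ Finset.Icc 1 n,
      (μ[fun ω' => (X i ω') ^ 2 | ℱ (i - 1)]) ω ≤ γ ^ 2 :=
    (ae_ball_iff (Finset.countable_toSet _)).2 hbd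
  filter_upwards [hbd'] with ω hω
  set g : ℕ → ℝ := fun i => (μ[fun ω' => (X i ω') ^ 2 | ℱ (i - 1)]) ω with hg
  set S : ℕ → ℝ := fun k => ∑ i ∈ Finset.Icc 1 k, g i with hS
  set A : Set ℕ := {k | k ≤ n ∧ S k ≤ s2} with hA
  have h0 : 0 ∈ A := ⟨Nat.zero_le n, by simp [hS, hpos.le]⟩
  have hbdd : BddAbove A := (bddAbove_Iic (a := n)).mono fun k hk => hk.1
  have hτmem : τ ω ≤ n ∧ S (τ ω) ≤ s2 := by
    have : τ ω ∈ A := by rw [hτ ω]; exact Nat.sSup_mem ⟨0, h0⟩ hbdd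
    exact this
  have hnot : ∀ k, k ≤ n → S k ≤ s2 → k ≤ τ ω := by
    intro k h1 h2
    rw [hτ ω]
    exact le_csSup hbdd ⟨h1, h2⟩
  show min _ _ ≤ S (τ ω)
  rcases eq_or_lt_of_le hτmem.1 with heq | hlt
  · rw [heq]
    have h1 : s2 * (s2⁻¹ * S n) = S n := by
      field_simp
    calc min (s2 * (s2⁻¹ * S n)) (s2 - γ ^ 2) ≤ s2 * (s2⁻¹ * S n) := min_le_left _ _
      _ = S n := h1
  · have hsucc : τ ω + 1 ≤ n := hlt
    have hgt : s2 < S (τ ω + 1) := by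
      by_contra h
      have := hnot (τ ω + 1) hsucc (le_of_not_gt h)
      omega
    have hsum : S (τ ω + 1) = S (τ ω) + g (τ ω + 1) := by
      simp [hS, Finset.sum_Icc_succ_top (Nat.succ_le_succ (Nat.zero_le _))]
    have hgb : g (τ ω + 1) ≤ γ ^ 2 :=
      hω (τ ω + 1) (Finset.mem_Icc.2 ⟨Nat.succ_le_succ (Nat.zero_le _), hsucc⟩)
    have : s2 - γ ^ 2 ≤ S (τ ω) := by
      rw [hsum] at hgt; linarith
    exact le_trans (min_le_right _ _) this
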